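/- Preservation of atomic arity by extended parallel reduction (subject reduction for arities, general form): if T₁ has atomic arity A in L₁, T₁ reduces to T₂ in one extended parallel step in L₁, and L₁ reduces to L₂ in one extended parallel step, then T₂ has atomic arity A in L₂. -/
import Mathlib


inductive Bk | abbr | abst
deriving DecidableEq

inductive Fk | appl | cast
deriving DecidableEq

inductive Tm
| sort : Nat → Tm
| lref : Nat → Tm
| bind : Bk → Tm → Tm → Tm
| flat : Fk → Tm → Tm → Tm
deriving DecidableEq

inductive Lift : Nat → Nat → Tm → Tm → Prop
| sort (l m k) : Lift l m (.sort k) (.sort k)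
| lt {l m i} : i < l → Lift l m (.lref i) (.lref i)
| ge {l m i} : l ≤ i → Lift l m (.lref i) (.lref (i + m))
| bind {l m b W₁ W₂ T₁ T₂} : Lift l m W₁ W₂ → Lift (l + 1) m T₁ T₂ →
    Lift l m (.bind b W₁ T₁) (.bind b W₂ T₂)
| flat {l m f V₁ V₂ T₁ T₂} : Lift l m V₁ V₂ → Lift l m T₁ T₂ →
    Lift l m (.flat f V₁ T₁) (.flat f V₂ T₂)

inductive Env
| null : Env
| pair : Env → Bk → Tm → Env
deriving DecidableEq

inductive Drop : Nat → Nat → Env → Env → Prop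
| atom (l) : Drop l 0 .null .null
| pair {L₁ L₂ b W} : Drop 0 0 L₁ L₂ → Drop 0 0 (.pair L₁ b W) (.pair L₂ b W)
| drop {m L₁ L₂ b W} : Drop 0 m L₁ L₂ → Drop 0 (m + 1) (.pair L₁ b W) L₂
| skip {l m L₁ L₂ b W₁ W₂} : Drop l m L₁ L₂ → Lift l m W₂ W₁ →
    Drop (l + 1) m (.pair L₁ b W₁) (.pair L₂ b W₂)

inductive Aa | star | impl : Aa → Aa → Aa
deriving DecidableEq

inductive Aaa : Env → Tm → Aa → Prop
| sort {L k} : Aaa L (.sort k) .star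
| lref {L K b W B i} : Drop 0 i L (.pair K b W) → Aaa K W B → Aaa L (.lref i) B
| abbr {L V T B A} : Aaa L V B → Aaa (.pair L .abbr V) T A →
    Aaa L (.bind .abbr V T) A
| abst {L W T B A} : Aaa L W B → Aaa (.pair L .abst W) T A →
    Aaa L (.bind .abst W T) (.impl B A)
| appl {L V T B A} : Aaa L V B → Aaa L T (.impl B A) → Aaa L (.flat .appl V T) A
| cast {L U T A} : Aaa L U A → Aaa L T A → Aaa L (.flat .cast U T) A

inductive Cpx (h g : Nat → Nat) : Env → Tm → Tm → Prop
| sort {L k} : Cpx h g L (.sort k) (.sort k)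
| lref {L i} : Cpx h g L (.lref i) (.lref i)
| st {L k d} : g k = d + 1 → Cpx h g L (.sort k) (.sort (h k))
| bind {L b W₁ W₂ T₁ T₂} : Cpx h g L W₁ W₂ → Cpx h g (.pair L b W₁) T₁ T₂ →
    Cpx h g L (.bind b W₁ T₁) (.bind b W₂ T₂)
| flat {L f V₁ V₂ T₁ T₂} : Cpx h g L V₁ V₂ → Cpx h g L T₁ T₂ →
    Cpx h g L (.flat f V₁ T₁) (.flat f V₂ T₂)
| delta {L K b W₁ W₂ V₂ i} : Drop 0 i L (.pair K b W₁) → Cpx h g K W₁ W₂ →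
    Lift 0 (i + 1) W₂ V₂ → Cpx h g L (.lref i) V₂
| beta {L V₁ V₂ W₁ W₂ T₁ T₂} : Cpx h g L V₁ V₂ → Cpx h g L W₁ W₂ →
    Cpx h g (.pair L .abst W₁) T₁ T₂ →
    Cpx h g L (.flat .appl V₁ (.bind .abst W₁ T₁))
      (.bind .abbr (.flat .cast W₂ V₂) T₂)
| zeta {L V U₁ U₂ T₂} : Cpx h g (.pair L .abbr V) U₁ U₂ → Lift 0 1 T₂ U₂ →
    Cpx h g L (.bind .abbr V U₁) T₂
| eps {L U T₁ T₂} : Cpx h g L T₁ T₂ → Cpx h g L (.flat .cast U T₁) T₂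
| ee {L U₁ U₂ T} : Cpx h g L U₁ U₂ → Cpx h g L (.flat .cast U₁ T) U₂
| theta {L V₁ V₂ W₂ U₁ U₂ T₁ T₂} : Cpx h g L V₁ V₂ → Lift 0 1 V₂ W₂ →
    Cpx h g L U₁ U₂ → Cpx h g (.pair L .abbr U₁) T₁ T₂ →
    Cpx h g L (.flat .appl V₁ (.bind .abbr U₁ T₁))
      (.bind .abbr U₂ (.flat .appl W₂ T₂))

inductive Lpx (h g : Nat → Nat) : Env → Env → Prop
| atom : Lpx h g .null .null
| pair {L₁ L₂ b W₁ W₂} : Lpx h g L₁ L₂ → Cpx h g L₁ W₁ W₂ →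
    Lpx h g (.pair L₁ b W₁) (.pair L₂ b W₂)

lemma drop_refl : ∀ (L : Env), Drop 0 0 L L
  | .null => .atom 0
  | .pair L b W => .pair (drop_refl L)

lemma drop_zero_eq' {l m : Nat} {L K : Env} (h : Drop l m L K) : l = 0 → m = 0 → K = L := by
  induction h with
  | atom => intros; rfl
  | pair _ ih => intro _ _; rw [ih rfl rfl]
  | drop _ _ => intro _ hm; exact absurd hm (Nat.succ_ne_zero _)
  | skip _ _ _ => intro hl; exact absurd hl (Nat.succ_ne_zero _)

lemma drop_zero_eq {L K : Env} (h : Drop 0 0 L K) : K = L := drop_zero_eq' h rfl rfl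

lemma drop_det {i : Nat} : ∀ {L K₁ K₂ : Env}, Drop 0 i L K₁ → Drop 0 i L K₂ → K₁ = K₂ := by
  induction i with
  | zero => intro L K₁ K₂ h1 h2; rw [drop_zero_eq h1, drop_zero_eq h2]
  | succ i ih =>
    intro L K₁ K₂ h1 h2
    cases h1 with
    | drop h1' =>
      cases h2 with
      | drop h2' => exact ih h1' h2'

lemma drop_succ {i : Nat} : ∀ {L K : Env} {b W}, Drop 0 i L (.pair K b W) → Drop 0 (i + 1) L K := by
  induction i with
  | zero => intro L K b W h; rw [← drop_zero_eq h]; exact .drop (drop_refl K)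
  | succ i ih =>
    intro L K b W h
    cases h with
    | drop h' => exact .drop (ih h')

lemma drop_conf_lt {i : Nat} : ∀ {j m : Nat} {L₁ L₂ K₂ : Env} {b W₂},
    Drop (i + j + 1) m L₁ L₂ → Drop 0 i L₂ (.pair K₂ b W₂) →
    ∃ K₁ W₁, Drop 0 i L₁ (.pair K₁ b W₁) ∧ Drop j m K₁ K₂ ∧ Lift j m W₂ W₁ := by
  induction i with
  | zero =>
    intro j m L₁ L₂ K₂ b W₂ h1 h2
    cases h1 with
    | atom => exact absurd (drop_zero_eq h2) (by simp)
    | skip hd hli =>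
      rw [Nat.zero_add] at hd hli
      obtain ⟨e1, e2, e3⟩ : _ ∧ _ ∧ _ := by
        have := drop_zero_eq h2; injection this with a b c; exact ⟨a, b, c⟩
      subst e1; subst e2; subst e3
      exact ⟨_, _, .pair (drop_refl _), hd, hli⟩
  | succ i ih =>
    intro j m L₁ L₂ K₂ b W₂ h1 h2
    cases h1 with
    | atom => cases h2
    | skip hd hli =>
      rw [Nat.add_right_comm i 1 j] at hd
      cases h2 with
      | drop h2' =>
        obtain ⟨K₁, W₁, d1, d2, d3⟩ := ih hd h2'
        exact ⟨K₁, W₁, .drop d1, d2, d3⟩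

lemma drop_trans_lt {i : Nat} : ∀ {j m : Nat} {L₁ L₂ K₁ : Env} {b W₁},
    Drop (i + j + 1) m L₁ L₂ → Drop 0 i L₁ (.pair K₁ b W₁) →
    ∃ K₂ W₂, Drop 0 i L₂ (.pair K₂ b W₂) ∧ Drop j m K₁ K₂ ∧ Lift j m W₂ W₁ := by
  induction i with
  | zero =>
    intro j m L₁ L₂ K₁ b W₁ h1 h2
    cases h1 with
    | atom => exact absurd (drop_zero_eq h2) (by simp)
    | skip hd hli =>
      rw [Nat.zero_add] at hd hli
      obtain ⟨e1, e2, e3⟩ : _ ∧ _ ∧ _ := by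
        have := drop_zero_eq h2; injection this with a b c; exact ⟨a, b, c⟩
      subst e1; subst e2; subst e3
      exact ⟨_, _, .pair (drop_refl _), hd, hli⟩
  | succ i ih =>
    intro j m L₁ L₂ K₁ b W₁ h1 h2
    cases h1 with
    | atom => cases h2
    | skip hd hli =>
      rw [Nat.add_right_comm i 1 j] at hd
      cases h2 with
      | drop h2' =>
        obtain ⟨K₂, W₂, d1, d2, d3⟩ := ih hd h2'
        exact ⟨K₂, W₂, .drop d1, d2, d3⟩

lemma drop_conf_ge {l m : Nat} {L₁ L₂ : Env} (h : Drop l m L₁ L₂) :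
    ∀ {i : Nat} {K : Env}, Drop 0 i L₂ K → l ≤ i → Drop 0 (i + m) L₁ K := by
  induction h with
  | atom => intro i K h2 _; exact h2
  | pair hd ih =>
    intro i K h2 _
    rw [drop_zero_eq hd] at h2; exact h2
  | drop hd ih =>
    intro i K h2 _
    exact .drop (ih h2 (Nat.zero_le _))
  | skip hd hli ih =>
    intro i K h2 hle
    obtain ⟨i', rfl⟩ : ∃ i', i = i' + 1 := ⟨i - 1, by omega⟩
    cases h2 with
    | drop h2' =>
      rw [Nat.add_right_comm]
      exact .drop (ih h2' (by omega))

lemma drop_trans_ge {l m : Nat} {L₁ L₂ : Env} (h : Drop l m L₁ L₂) :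
    ∀ {i : Nat} {K : Env}, Drop 0 (i + m) L₁ K → l ≤ i → Drop 0 i L₂ K := by
  induction h with
  | atom => intro i K h2 _; exact h2
  | pair hd ih =>
    intro i K h2 _
    rw [drop_zero_eq hd]; exact h2
  | drop hd ih =>
    intro i K h2 _
    cases h2 with
    | drop h2' => exact ih h2' (Nat.zero_le _)
  | skip hd hli ih =>
    intro i K h2 hle
    obtain ⟨i', rfl⟩ : ∃ i', i = i' + 1 := ⟨i - 1, by omega⟩
    rw [Nat.add_right_comm] at h2
    cases h2 with
    | drop h2' => exact .drop (ih h2' (by omega))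
lemma aaa_lift_up {L₂ : Env} {T₂ : Tm} {A : Aa} (ha : Aaa L₂ T₂ A) :
    ∀ {l m : Nat} {L₁ : Env} {T₁ : Tm}, Drop l m L₁ L₂ → Lift l m T₂ T₁ → Aaa L₁ T₁ A := by
  induction ha with
  | sort =>
    intro l m L₁ T₁ hd hli
    cases hli; exact .sort
  | lref hd0 hW ih =>
    intro l m L₁ T₁ hd hli
    cases hli with
    | lt hil =>
      obtain ⟨j, rfl⟩ := Nat.exists_eq_add_of_lt hil
      obtain ⟨K₁, W₁, d1, d2, d3⟩ := drop_conf_lt hd hd0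
      exact .lref d1 (ih d2 d3)
    | ge hle => exact .lref (drop_conf_ge hd hd0 hle) hW
  | abbr hV hT ihV ihT =>
    intro l m L₁ T₁ hd hli
    cases hli with
    | bind h1 h2 => exact .abbr (ihV hd h1) (ihT (.skip hd h1) h2)
  | abst hW hT ihW ihT =>
    intro l m L₁ T₁ hd hli
    cases hli with
    | bind h1 h2 => exact .abst (ihW hd h1) (ihT (.skip hd h1) h2)
  | appl hV hT ihV ihT =>
    intro l m L₁ T₁ hd hli
    cases hli with
    | flat h1 h2 => exact .appl (ihV hd h1) (ihT hd h2)
  | cast hU hT ihU ihT =>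
    intro l m L₁ T₁ hd hli
    cases hli with
    | flat h1 h2 => exact .cast (ihU hd h1) (ihT hd h2)

lemma aaa_lift_down {L₁ : Env} {T₁ : Tm} {A : Aa} (ha : Aaa L₁ T₁ A) :
    ∀ {l m : Nat} {L₂ : Env} {T₂ : Tm}, Drop l m L₁ L₂ → Lift l m T₂ T₁ → Aaa L₂ T₂ A := by
  induction ha with
  | sort =>
    intro l m L₂ T₂ hd hli
    cases hli; exact .sort
  | lref hd0 hW ih =>
    intro l m L₂ T₂ hd hli
    cases hli with
    | lt hil =>
      obtain ⟨j, rfl⟩ := Nat.exists_eq_add_of_lt hil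
      obtain ⟨K₂, W₂, d1, d2, d3⟩ := drop_trans_lt hd hd0
      exact .lref d1 (ih d2 d3)
    | ge hle => exact .lref (drop_trans_ge hd hd0 hle) hW
  | abbr hV hT ihV ihT =>
    intro l m L₂ T₂ hd hli
    cases hli with
    | bind h1 h2 => exact .abbr (ihV hd h1) (ihT (.skip hd h1) h2)
  | abst hW hT ihW ihT =>
    intro l m L₂ T₂ hd hli
    cases hli with
    | bind h1 h2 => exact .abst (ihW hd h1) (ihT (.skip hd h1) h2)
  | appl hV hT ihV ihT =>
    intro l m L₂ T₂ hd hli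
    cases hli with
    | flat h1 h2 => exact .appl (ihV hd h1) (ihT hd h2)
  | cast hU hT ihU ihT =>
    intro l m L₂ T₂ hd hli
    cases hli with
    | flat h1 h2 => exact .cast (ihU hd h1) (ihT hd h2)

lemma cpx_refl (h g : Nat → Nat) : ∀ (T : Tm) (L : Env), Cpx h g L T T
  | .sort _, _ => .sort
  | .lref _, _ => .lref
  | .bind b W T, L => .bind (cpx_refl h g W L) (cpx_refl h g T (.pair L b W))
  | .flat _ V T, L => .flat (cpx_refl h g V L) (cpx_refl h g T L)

lemma lpx_drop {h g : Nat → Nat} {L₁ L₂ : Env} (hl : Lpx h g L₁ L₂) :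
    ∀ {i : Nat} {K₁ : Env} {b W₁}, Drop 0 i L₁ (.pair K₁ b W₁) →
    ∃ K₂ W₂, Drop 0 i L₂ (.pair K₂ b W₂) ∧ Lpx h g K₁ K₂ ∧ Cpx h g K₁ W₁ W₂ := by
  induction hl with
  | atom => intro i K₁ b W₁ hd; cases hd
  | pair hL hW ihL =>
    intro i K₁ b W₁ hd
    cases hd with
    | pair hd' =>
      obtain rfl := drop_zero_eq hd'
      exact ⟨_, _, .pair (drop_refl _), hL, hW⟩
    | drop hd' =>
      obtain ⟨K₂, W₂, d1, d2, d3⟩ := ihL hd'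
      exact ⟨K₂, W₂, .drop d1, d2, d3⟩

lemma aaa_unique {L : Env} {T : Tm} {A₁ : Aa} (h1 : Aaa L T A₁) :
    ∀ {A₂ : Aa}, Aaa L T A₂ → A₁ = A₂ := by
  induction h1 with
  | sort => intro A₂ h2; cases h2; rfl
  | lref hd hW ih =>
    intro A₂ h2
    cases h2 with
    | lref hd' hW' =>
      obtain ⟨e1, e2, e3⟩ : _ ∧ _ ∧ _ := by
        have := drop_det hd hd'; injection this with a b c; exact ⟨a, b, c⟩
      subst e1; subst e2; subst e3
      exact ih hW'
  | abbr _ _ ihV ihT =>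
    intro A₂ h2
    cases h2 with
    | abbr hV' hT' =>
      obtain rfl := ihV hV'
      exact ihT hT'
  | abst _ _ ihW ihT =>
    intro A₂ h2
    cases h2 with
    | abst hW' hT' => rw [ihW hW', ihT hT']
  | appl _ _ ihV ihT =>
    intro A₂ h2
    cases h2 with
    | appl hV' hT' =>
      obtain rfl := ihV hV'
      have := ihT hT'
      injection this
  | cast _ _ ihU ihT =>
    intro A₂ h2
    cases h2 with
    | cast hU' hT' => exact ihT hT'

inductive LsubA : Env → Env → Prop
| atom : LsubA .null .null
| pair {L₁ L₂ b W} : LsubA L₁ L₂ → LsubA (.pair L₁ b W) (.pair L₂ b W)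
| beta {L₁ L₂ W V B} : Aaa L₁ (.flat .cast W V) B → Aaa L₂ W B → LsubA L₁ L₂ →
    LsubA (.pair L₁ .abbr (.flat .cast W V)) (.pair L₂ .abst W)

lemma lsuba_refl : ∀ (L : Env), LsubA L L
  | .null => .atom
  | .pair L _ _ => .pair (lsuba_refl L)

lemma lsuba_drop {L₁ L₂ : Env} (hs : LsubA L₁ L₂) :
    ∀ {i : Nat} {K₂ : Env} {b W}, Drop 0 i L₂ (.pair K₂ b W) →
    (∃ K₁, Drop 0 i L₁ (.pair K₁ b W) ∧ LsubA K₁ K₂) ∨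
    (∃ K₁ V B, b = .abst ∧ Drop 0 i L₁ (.pair K₁ .abbr (.flat .cast W V)) ∧
      LsubA K₁ K₂ ∧ Aaa K₁ (.flat .cast W V) B ∧ Aaa K₂ W B) := by
  induction hs with
  | atom => intro i K₂ b W hd; cases hd
  | pair h ih =>
    intro i K₂ b W hd
    cases hd with
    | pair hd' =>
      obtain rfl := drop_zero_eq hd'
      exact Or.inl ⟨_, .pair (drop_refl _), h⟩
    | drop hd' =>
      rcases ih hd' with ⟨K₁, d1, d2⟩ | ⟨K₁, V, B, e, d1, d2, d3, d4⟩
      · exact Or.inl ⟨K₁, .drop d1, d2⟩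
      · exact Or.inr ⟨K₁, V, B, e, .drop d1, d2, d3, d4⟩
  | beta haC haW h ih =>
    intro i K₂ b W hd
    cases hd with
    | pair hd' =>
      obtain rfl := drop_zero_eq hd'
      exact Or.inr ⟨_, _, _, rfl, .pair (drop_refl _), h, haC, haW⟩
    | drop hd' =>
      rcases ih hd' with ⟨K₁, d1, d2⟩ | ⟨K₁, V, B, e, d1, d2, d3, d4⟩
      · exact Or.inl ⟨K₁, .drop d1, d2⟩
      · exact Or.inr ⟨K₁, V, B, e, .drop d1, d2, d3, d4⟩

lemma lsuba_aaa {L₂ : Env} {T : Tm} {A : Aa} (ha : Aaa L₂ T A) :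
    ∀ {L₁ : Env}, LsubA L₁ L₂ → Aaa L₁ T A := by
  induction ha with
  | sort => intro L₁ _; exact .sort
  | lref hd hW ih =>
    intro L₁ hs
    rcases lsuba_drop hs hd with ⟨K₁, d1, d2⟩ | ⟨K₁, V, B', e, d1, d2, d3, d4⟩
    · exact .lref d1 (ih d2)
    · obtain rfl := aaa_unique d4 hW
      exact .lref d1 d3
  | abbr hV hT ihV ihT => intro L₁ hs; exact .abbr (ihV hs) (ihT (.pair hs))
  | abst hW hT ihW ihT => intro L₁ hs; exact .abst (ihW hs) (ihT (.pair hs))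
  | appl hV hT ihV ihT => intro L₁ hs; exact .appl (ihV hs) (ihT hs)
  | cast hU hT ihU ihT => intro L₁ hs; exact .cast (ihU hs) (ihT hs)
theorem cpx_lpx_aaa_conf {h g : Nat → Nat}
    (hh : ∀ k, k < h k) (hg : ∀ k d, g k = d + 1 → g (h k) = d)
    {L₁ L₂ : Env} {T₁ T₂ : Tm} {A : Aa}
    (ha : Aaa L₁ T₁ A) (ht : Cpx h g L₁ T₁ T₂) (hl : Lpx h g L₁ L₂) :
    Aaa L₂ T₂ A := by
  induction ha generalizing T₂ L₂ with
  | sort =>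
    cases ht with
    | sort => exact .sort
    | st _ => exact .sort
  | lref hd hW ih =>
    cases ht with
    | lref =>
      obtain ⟨K₂, W₂, d1, d2, d3⟩ := lpx_drop hl hd
      exact .lref d1 (ih d3 d2)
    | delta hd' hW' hli =>
      obtain ⟨e1, e2, e3⟩ : _ ∧ _ ∧ _ := by
        have := drop_det hd hd'; injection this with a b c; exact ⟨a, b, c⟩
      subst e1; subst e2; subst e3
      obtain ⟨K₂, W₂', d1, d2, d3⟩ := lpx_drop hl hd
      have hW₂ := ih hW' d2
      exact aaa_lift_up hW₂ (drop_succ d1) hli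
  | abbr hV hT ihV ihT =>
    cases ht with
    | bind hW' hT' => exact .abbr (ihV hW' hl) (ihT hT' (.pair hl hW'))
    | zeta hU' hli =>
      have hU₂ := ihT hU' (.pair hl (cpx_refl h g _ _))
      exact aaa_lift_down hU₂ (.drop (drop_refl _)) hli
  | abst hW hT ihW ihT =>
    cases ht with
    | bind hW' hT' => exact .abst (ihW hW' hl) (ihT hT' (.pair hl hW'))
  | appl hV hT ihV ihT =>
    cases ht with
    | flat h1 h2 => exact .appl (ihV h1 hl) (ihT h2 hl)
    | beta hV' hW' hT' =>
      have hbind := ihT (Cpx.bind hW' hT') hl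
      cases hbind with
      | abst hW₂ hT₂ =>
        have hV₂ := ihV hV' hl
        exact .abbr (.cast hW₂ hV₂) (lsuba_aaa hT₂ (.beta (.cast hW₂ hV₂) hW₂ (lsuba_refl _)))
    | theta hV' hli hU' hT' =>
      have hbind := ihT (Cpx.bind hU' hT') hl
      cases hbind with
      | abbr hU₂ hT₂ =>
        have hV₂ := ihV hV' hl
        exact .abbr hU₂ (.appl (aaa_lift_up hV₂ (Drop.drop (drop_refl _)) hli) hT₂)
  | cast hU hT ihU ihT =>
    cases ht with
    | flat h1 h2 => exact .cast (ihU h1 hl) (ihT h2 hl)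
    | eps h1 => exact ihT h1 hl
    | ee h1 => exact ihU h1 hl
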